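/- Fix R_M > 0 and set ε_M = 2^{R_M} − 1. Fix u > 0 and real numbers x₁, x₂ with u ≤ x₁ ≤ x₂. For ρ > ε_M/u define F_u^{(ρ)}(x) = log₂(1 + ρ x (u − ε_M/ρ)/(u(1+ε_M))) − (1 − R_M/log₂(1+ρu)) · log₂(1+ρx). Then there exists ρ₀ > ε_M/u such that for all ρ ≥ ρ₀, F_u^{(ρ)}(x₁) ≤ F_u^{(ρ)}(x₂); that is, in the high SNR regime the function x ↦ F_u^{(ρ)}(x) is monotonically increasing on [u, ∞). -/

import Mathlib

open Real

private lemma key_mono (RM εM u x₁ x₂ ρ : ℝ) (hRM : 0 < RM) (hεM : 0 < εM)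
    (hu : 0 < u) (hx₁ : u ≤ x₁) (hx₂ : x₁ ≤ x₂) (hρ : εM / u < ρ)
    (hC2 : Real.log (1 + ρ * u) ≤ Real.log 2 * RM / (1 + εM) * (ρ * u - εM)) :
    Real.logb 2 (1 + ρ * x₁ * (u - εM / ρ) / (u * (1 + εM))) -
      (1 - RM / Real.logb 2 (1 + ρ * u)) * Real.logb 2 (1 + ρ * x₁) ≤
    Real.logb 2 (1 + ρ * x₂ * (u - εM / ρ) / (u * (1 + εM))) -
      (1 - RM / Real.logb 2 (1 + ρ * u)) * Real.logb 2 (1 + ρ * x₂) := by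
  have hρ0 : 0 < ρ := lt_trans (div_pos hεM hu) hρ
  have hεu : εM < ρ * u := by
    have := (div_lt_iff₀ hu).mp hρ; linarith
  have h1ε : (0:ℝ) < 1 + εM := by linarith
  set a : ℝ := (ρ * u - εM) / (u * (1 + εM)) with ha_def
  have ha : 0 < a := div_pos (by linarith) (by positivity)
  have harg : ∀ x : ℝ, ρ * x * (u - εM / ρ) / (u * (1 + εM)) = a * x := by
    intro x
    rw [ha_def]
    field_simp
  set L : ℝ := Real.logb 2 (1 + ρ * u) with hL_def
  have hL : 0 < L := Real.logb_pos (by norm_num) (by nlinarith)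
  set c : ℝ := 1 - RM / L with hc_def
  have hlog2 : 0 < Real.log 2 := Real.log_pos (by norm_num)
  -- key bound: L ≤ a * u * RM
  have hK : L ≤ a * u * RM := by
    have hau2 : a * u = (ρ * u - εM) / (1 + εM) := by
      rw [ha_def]; field_simp
    have hlog_le : Real.log (1 + ρ * u) ≤ a * u * RM * Real.log 2 := by
      calc Real.log (1 + ρ * u) ≤ Real.log 2 * RM / (1 + εM) * (ρ * u - εM) := hC2
        _ = a * u * RM * Real.log 2 := by rw [hau2]; ring
    rw [hL_def, Real.logb]
    exact (div_le_iff₀ hlog2).mpr hlog_le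
  -- the function h
  set h : ℝ → ℝ := fun x => Real.log (1 + a * x) - c * Real.log (1 + ρ * x) with hh_def
  have hder : ∀ x : ℝ, u ≤ x →
      HasDerivAt h ((1 + a * x)⁻¹ * a - c * ((1 + ρ * x)⁻¹ * ρ)) x := by
    intro x hx
    have h1 : (0:ℝ) < 1 + a * x := by nlinarith
    have h2 : (0:ℝ) < 1 + ρ * x := by nlinarith
    have g1 : HasDerivAt (fun y : ℝ => 1 + a * y) a x := by
      simpa using ((hasDerivAt_id x).const_mul a).const_add 1
    have g2 : HasDerivAt (fun y : ℝ => 1 + ρ * y) ρ x := by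
      simpa using ((hasDerivAt_id x).const_mul ρ).const_add 1
    have d1 : HasDerivAt (fun y : ℝ => Real.log (1 + a * y)) ((1 + a * x)⁻¹ * a) x := by
      have := (Real.hasDerivAt_log h1.ne').comp x g1
      exact this
    have d2 : HasDerivAt (fun y : ℝ => Real.log (1 + ρ * y)) ((1 + ρ * x)⁻¹ * ρ) x := by
      have := (Real.hasDerivAt_log h2.ne').comp x g2
      exact this
    exact d1.sub (d2.const_mul c)
  have hderiv_nonneg : ∀ x : ℝ, u < x →
      0 ≤ (1 + a * x)⁻¹ * a - c * ((1 + ρ * x)⁻¹ * ρ) := by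
    intro x hx
    have h1 : (0:ℝ) < 1 + a * x := by nlinarith
    have h2 : (0:ℝ) < 1 + ρ * x := by nlinarith
    rw [sub_nonneg, inv_mul_eq_div, inv_mul_eq_div, mul_div_assoc']
    rw [div_le_div_iff₀ h2 h1]
    -- need : c * ρ * (1 + a * x) ≤ a * (1 + ρ * x)
    have hcL : c * L = L - RM := by
      rw [hc_def]; field_simp
    have hstep : L * (c * ρ * (1 + a * x)) ≤ L * (a * (1 + ρ * x)) := by
      have e1 : L * (c * ρ * (1 + a * x)) = (L - RM) * ρ * (1 + a * x) := by
        have : L * (c * ρ * (1 + a * x)) = (c * L) * (ρ * (1 + a * x)) := by ring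
        rw [this, hcL]; ring
      rw [e1]
      nlinarith [mul_le_mul_of_nonneg_right hK hρ0.le,
        mul_nonneg (mul_nonneg (mul_nonneg hRM.le hρ0.le) ha.le) (sub_nonneg.mpr hx.le),
        mul_pos hL ha, mul_pos hRM hρ0]
    exact le_of_mul_le_mul_left hstep hL
  have hmono : MonotoneOn h (Set.Ici u) := by
    apply monotoneOn_of_deriv_nonneg (convex_Ici u)
    · intro x hx
      exact ((hder x hx).continuousAt).continuousWithinAt
    · intro x hx
      rw [interior_Ici] at hx
      exact (hder x (le_of_lt hx)).differentiableAt.differentiableWithinAt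
    · intro x hx
      rw [interior_Ici] at hx
      rw [(hder x (le_of_lt hx)).deriv]
      exact hderiv_nonneg x hx
  have hx₂u : u ≤ x₂ := le_trans hx₁ hx₂
  have hmain : h x₁ ≤ h x₂ := hmono hx₁ hx₂u hx₂
  rw [harg x₁, harg x₂]
  have hrw : ∀ x : ℝ, Real.logb 2 (1 + a * x) - c * Real.logb 2 (1 + ρ * x)
      = h x / Real.log 2 := by
    intro x
    rw [hh_def]
    simp only [Real.logb]
    ring
  calc Real.logb 2 (1 + a * x₁) - c * Real.logb 2 (1 + ρ * x₁)
      = h x₁ / Real.log 2 := hrw x₁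
    _ ≤ h x₂ / Real.log 2 := by
        gcongr
    _ = Real.logb 2 (1 + a * x₂) - c * Real.logb 2 (1 + ρ * x₂) := (hrw x₂).symm

theorem noma_rate_difference_monotone_high_snr
    (RM εM : ℝ) (hRM : 0 < RM) (hεM : εM = 2 ^ RM - 1)
    (u x₁ x₂ : ℝ) (hu : 0 < u) (hx₁ : u ≤ x₁) (hx₂ : x₁ ≤ x₂)
    (F : ℝ → ℝ → ℝ)
    (hF : ∀ ρ x, F ρ x =
      Real.logb 2 (1 + ρ * x * (u - εM / ρ) / (u * (1 + εM))) -
        (1 - RM / Real.logb 2 (1 + ρ * u)) * Real.logb 2 (1 + ρ * x)) :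
    ∃ ρ₀ : ℝ, εM / u < ρ₀ ∧ ∀ ρ : ℝ, ρ₀ ≤ ρ → F ρ x₁ ≤ F ρ x₂ := by
  have hεM0 : 0 < εM := by
    rw [hεM, sub_pos]
    exact Real.one_lt_rpow_iff_of_pos (by norm_num) |>.mpr (Or.inl ⟨by norm_num, hRM⟩)
  have h1ε : (0:ℝ) < 1 + εM := by linarith
  have hlog2 : 0 < Real.log 2 := Real.log_pos (by norm_num)
  set c₁ : ℝ := Real.log 2 * RM / (1 + εM) with hc₁
  have hc₁pos : 0 < c₁ := by positivity
  -- eventually log (1+ρu) ≤ c₁ * (ρ u - εM)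
  have hsmall : (fun ρ : ℝ => Real.log (1 + ρ * u)) =o[Filter.atTop] (id : ℝ → ℝ) := by
    have htend : Filter.Tendsto (fun ρ : ℝ => 1 + ρ * u) Filter.atTop Filter.atTop := by
      apply Filter.tendsto_atTop_add_const_left
      exact Filter.Tendsto.atTop_mul_const hu Filter.tendsto_id
    have h1 : (fun ρ : ℝ => Real.log (1 + ρ * u)) =o[Filter.atTop]
        (fun ρ : ℝ => 1 + ρ * u) :=
      Real.isLittleO_log_id_atTop.comp_tendsto htend
    have h2 : (fun ρ : ℝ => 1 + ρ * u) =O[Filter.atTop] (id : ℝ → ℝ) := by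
      apply Asymptotics.IsBigO.of_bound (1 + u)
      filter_upwards [Filter.eventually_ge_atTop (max 1 (1/u))] with ρ hρ
      have hρ1 : (1:ℝ) ≤ ρ := le_trans (le_max_left _ _) hρ
      have : (0:ℝ) < ρ := by linarith
      rw [Real.norm_eq_abs, Real.norm_eq_abs, id]
      rw [abs_of_pos (by nlinarith), abs_of_pos this]
      nlinarith
    exact h1.trans_isBigO h2
  have hev : ∀ᶠ ρ : ℝ in Filter.atTop,
      Real.log (1 + ρ * u) ≤ c₁ * (ρ * u - εM) := by
    have hb := hsmall.def (show (0:ℝ) < c₁ * u / 2 by positivity)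
    filter_upwards [hb, Filter.eventually_ge_atTop (1:ℝ),
      Filter.eventually_ge_atTop (2 * εM / u)] with ρ hbρ hρ1 hρ2
    have hρ0 : (0:ℝ) < ρ := by linarith
    have : Real.log (1 + ρ * u) ≤ c₁ * u / 2 * ρ := by
      calc Real.log (1 + ρ * u) ≤ |Real.log (1 + ρ * u)| := le_abs_self _
        _ ≤ c₁ * u / 2 * |ρ| := by simpa [Real.norm_eq_abs] using hbρ
        _ = c₁ * u / 2 * ρ := by rw [abs_of_pos hρ0]
    have h2 : c₁ * u / 2 * ρ ≤ c₁ * (ρ * u - εM) := by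
      have : 2 * εM ≤ ρ * u := by
        have := (div_le_iff₀ hu).mp hρ2; linarith
      nlinarith
    linarith
  obtain ⟨ρ₁, hρ₁⟩ := Filter.eventually_atTop.mp hev
  refine ⟨max ρ₁ (εM / u + 1), lt_of_lt_of_le (lt_add_one _) (le_max_right _ _), ?_⟩
  intro ρ hρ
  have hρa : εM / u < ρ := lt_of_lt_of_le (lt_of_lt_of_le (lt_add_one _) (le_max_right _ _)) hρ
  have hρb : ρ₁ ≤ ρ := le_trans (le_max_left _ _) hρ
  rw [hF, hF]
  exact key_mono RM εM u x₁ x₂ ρ hRM hεM0 hu hx₁ hx₂ hρa (hρ₁ ρ hρb)
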